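/- Let {a_n}_{n≥1} be a nonnegative real sequence which is a mean value bounded variation sequence (MVBVS) with parameter λ ≥ 2 and constant C > 0, and suppose there exist ε > 0 and n_0 ≥ 1 such that k·a_k < ε for all k ≥ n_0. Then there is a constant C' > 0 (depending only on the sequence and λ) such that for all N ≥ λ·n_0, the tail variation satisfies ∑_{k=N}^∞ |a_k − a_{k+1}| ≤ C'·ε/N. -/

import Mathlib

open Filter

set_option maxHeartbeats 1600000 in
/-- For a nonnegative MVBV sequence with parameter `λ ≥ 2` and constant `C > 0`
such that `k·a_k < ε` for all `k ≥ n₀`, there is a constant `C' > 0` such that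
for all `N ≥ λ·n₀` the tail variation is summable with
`∑_{k=N}^∞ |a_k − a_{k+1}| ≤ C'·ε/N`. -/
theorem stmt15 (a : ℕ → ℝ) (ha : ∀ n : ℕ, 1 ≤ n → 0 ≤ a n)
    (lam : ℝ) (hlam : 2 ≤ lam) (C : ℝ) (hC : 0 < C)
    (hMVBV : ∀ n : ℕ, 1 ≤ n →
      ∑ k ∈ Finset.Icc n (2 * n), |a k - a (k + 1)| ≤
        (C / n) * ∑ k ∈ Finset.Icc ⌊(n : ℝ) / lam⌋₊ ⌊lam * n⌋₊, a k)
    (ε : ℝ) (hε : 0 < ε) (n₀ : ℕ) (hn₀ : 1 ≤ n₀)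
    (hsmall : ∀ k : ℕ, n₀ ≤ k → (k : ℝ) * a k < ε) :
    ∃ C' : ℝ, 0 < C' ∧ ∀ N : ℕ, lam * n₀ ≤ (N : ℝ) →
      (Summable fun k : ℕ => |a (N + k) - a (N + k + 1)|) ∧
      ∑' k : ℕ, |a (N + k) - a (N + k + 1)| ≤ C' * ε / N := by
  have hlam0 : (0:ℝ) < lam := by linarith
  have hn₀R : (1:ℝ) ≤ (n₀:ℝ) := by exact_mod_cast hn₀
  set K : ℝ := 4 * C * lam ^ 2 with hK
  have hKpos : 0 < K := by positivity
  -- key block estimate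
  have key : ∀ n : ℕ, lam * n₀ ≤ (n : ℝ) →
      ∑ k ∈ Finset.Icc n (2 * n), |a k - a (k + 1)| ≤ K * ε / n := by
    intro n hn
    have hn2 : (2:ℝ) ≤ (n:ℝ) := by nlinarith
    have hn1 : 1 ≤ n := by exact_mod_cast (by linarith : (1:ℝ) ≤ (n:ℝ))
    have hnR : (0:ℝ) < n := by linarith
    set m := ⌊(n : ℝ) / lam⌋₊ with hm
    set M := ⌊lam * (n:ℝ)⌋₊ with hMdef
    have hmn₀ : n₀ ≤ m := Nat.le_floor (by
      rw [le_div_iff₀ hlam0]; nlinarith)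
    have hm1 : 1 ≤ m := le_trans hn₀ hmn₀
    have hmR : (1:ℝ) ≤ (m:ℝ) := by exact_mod_cast hm1
    have hmfloor : (n:ℝ)/lam < (m:ℝ) + 1 := Nat.lt_floor_add_one _
    have hmlow : (n:ℝ) < 2 * lam * m := by
      have h1 : (n:ℝ)/lam < 2*(m:ℝ) := by linarith
      have := mul_lt_mul_of_pos_right h1 hlam0
      rw [div_mul_cancel₀ _ (ne_of_gt hlam0)] at this
      nlinarith
    have hA : ∑ k ∈ Finset.Icc m M, a k ≤ ((M:ℝ) + 1) * (ε / m) := by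
      have hcard : (Finset.Icc m M).card ≤ M + 1 := by
        rw [Nat.card_Icc]; omega
      calc ∑ k ∈ Finset.Icc m M, a k ≤ ∑ _k ∈ Finset.Icc m M, (ε / m) := by
            apply Finset.sum_le_sum
            intro k hk
            have hkm : m ≤ k := (Finset.mem_Icc.mp hk).1
            have hkn₀ : n₀ ≤ k := le_trans hmn₀ hkm
            have h1 : (k:ℝ) * a k < ε := hsmall k hkn₀
            have hak : 0 ≤ a k := ha k (le_trans hm1 hkm)
            have hkR : (m:ℝ) ≤ (k:ℝ) := by exact_mod_cast hkm
            have h2 : (m:ℝ) * a k ≤ (k:ℝ) * a k := by nlinarith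
            rw [le_div_iff₀ (by linarith : (0:ℝ) < (m:ℝ))]
            nlinarith
        _ = (Finset.Icc m M).card * (ε / m) := by
            rw [Finset.sum_const, nsmul_eq_mul]
        _ ≤ ((M:ℝ)+1) * (ε/m) := by
            apply mul_le_mul_of_nonneg_right _ (by positivity)
            exact_mod_cast hcard
    have hMle : (M:ℝ) ≤ lam * n := Nat.floor_le (by positivity)
    have hmain := hMVBV n hn1
    have hMb : (M:ℝ) + 1 ≤ 2 * lam * n := by nlinarith
    have hεm : ε / m ≤ 2 * lam * ε / n := by
      rw [div_le_div_iff₀ (by linarith) hnR]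
      nlinarith
    have hprod : ((M:ℝ)+1) * (ε/m) ≤ 4 * lam^2 * ε := by
      have h1 : ((M:ℝ)+1) * (ε/m) ≤ (2*lam*n) * (2*lam*ε/n) := by
        apply mul_le_mul hMb hεm (by positivity) (by positivity)
      have h2 : (2*lam*(n:ℝ)) * (2*lam*ε/n) = 4*lam^2*ε := by
        field_simp; ring
      linarith
    calc ∑ k ∈ Finset.Icc n (2*n), |a k - a (k+1)|
        ≤ (C/n) * ∑ k ∈ Finset.Icc m M, a k := hmain
      _ ≤ (C/n) * (((M:ℝ)+1) * (ε/m)) :=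
          mul_le_mul_of_nonneg_left hA (by positivity)
      _ ≤ (C/n) * (4*lam^2*ε) :=
          mul_le_mul_of_nonneg_left hprod (by positivity)
      _ = K * ε / n := by rw [hK]; ring
  refine ⟨4*K, by positivity, fun N hN => ?_⟩
  have hNR : (2:ℝ) ≤ (N:ℝ) := by
    have h := mul_le_mul hlam hn₀R (by norm_num) (by linarith : (0:ℝ) ≤ lam)
    linarith
  have hN1 : 1 ≤ N := by exact_mod_cast (by linarith : (1:ℝ) ≤ (N:ℝ))
  have hNpos : (0:ℝ) < N := by linarith
  -- dyadic block bound
  have S : ∀ j : ℕ, ∑ k ∈ Finset.Icc N (2^j * N), |a k - a (k + 1)| ≤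
      (4 - 2*(1/2:ℝ)^j) * (K*ε/N) := by
    intro j
    induction j with
    | zero =>
      have h0 : ∑ k ∈ Finset.Icc N (2^0 * N), |a k - a (k+1)| ≤
          ∑ k ∈ Finset.Icc N (2*N), |a k - a (k+1)| := by
        apply Finset.sum_le_sum_of_subset_of_nonneg
        · apply Finset.Icc_subset_Icc_right; omega
        · intros; exact abs_nonneg _
      have h1 := key N hN
      have h2 : (0:ℝ) ≤ K*ε/N := by positivity
      calc ∑ k ∈ Finset.Icc N (2^0 * N), |a k - a (k+1)| ≤ K*ε/N := le_trans h0 h1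
        _ ≤ (4 - 2*(1/2:ℝ)^0) * (K*ε/N) := by
            have : (4 - 2*(1/2:ℝ)^0) = 2 := by norm_num
            rw [this]; linarith
    | succ j ih =>
      have hNblock : lam * n₀ ≤ ((2^j * N : ℕ) : ℝ) := by
        have h1 : (N:ℝ) ≤ ((2^j * N : ℕ) : ℝ) := by
          have hp : 1 ≤ 2^j := Nat.one_le_two_pow
          have : N ≤ 2^j * N := by
            calc N = 1*N := (one_mul N).symm
              _ ≤ 2^j*N := Nat.mul_le_mul_right N hp
          exact_mod_cast this
        linarith
      have hblock := key (2^j * N) hNblock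
      have heq : Finset.Icc (2^j*N) (2^(j+1)*N) = Finset.Icc (2^j*N) (2*(2^j*N)) := by
        congr 1; ring
      have hblock' : ∑ k ∈ Finset.Icc (2^j*N) (2^(j+1)*N), |a k - a (k+1)| ≤
          (1/2:ℝ)^j * (K*ε/N) := by
        rw [heq]
        refine le_trans hblock (le_of_eq ?_)
        have h2j : ((2:ℝ)^j) ≠ 0 := by positivity
        push_cast
        field_simp
        try ring
        rw [← mul_pow]; norm_num
      have hsub : Finset.Icc N (2^(j+1)*N) ⊆
          Finset.Icc N (2^j*N) ∪ Finset.Icc (2^j*N) (2^(j+1)*N) := by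
        intro k hk
        simp only [Finset.mem_Icc, Finset.mem_union] at *
        omega
      have hstep : ∑ k ∈ Finset.Icc N (2^(j+1)*N), |a k - a (k+1)| ≤
          ∑ k ∈ Finset.Icc N (2^j*N), |a k - a (k+1)| +
          ∑ k ∈ Finset.Icc (2^j*N) (2^(j+1)*N), |a k - a (k+1)| := by
        refine le_trans (Finset.sum_le_sum_of_subset_of_nonneg hsub
          (fun _ _ _ => abs_nonneg _)) ?_
        have huni : (∑ k ∈ Finset.Icc N (2^j*N) ∪ Finset.Icc (2^j*N) (2^(j+1)*N),
              |a k - a (k+1)|) +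
            ∑ k ∈ Finset.Icc N (2^j*N) ∩ Finset.Icc (2^j*N) (2^(j+1)*N), |a k - a (k+1)| =
            (∑ k ∈ Finset.Icc N (2^j*N), |a k - a (k+1)|) +
            ∑ k ∈ Finset.Icc (2^j*N) (2^(j+1)*N), |a k - a (k+1)| :=
          Finset.sum_union_inter
        have hinter : (0:ℝ) ≤ ∑ k ∈ Finset.Icc N (2^j*N) ∩ Finset.Icc (2^j*N) (2^(j+1)*N),
            |a k - a (k+1)| := Finset.sum_nonneg (fun _ _ => abs_nonneg _)
        linarith
      have hpow : ((1/2:ℝ))^(j+1) = (1/2:ℝ)^j / 2 := by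
        rw [pow_succ]; ring
      have h2 : (0:ℝ) ≤ K*ε/N := by positivity
      calc ∑ k ∈ Finset.Icc N (2^(j+1)*N), |a k - a (k+1)|
          ≤ (4 - 2*(1/2:ℝ)^j) * (K*ε/N) + (1/2:ℝ)^j * (K*ε/N) := by linarith
        _ = (4 - (1/2:ℝ)^j) * (K*ε/N) := by ring
        _ = (4 - 2*(1/2:ℝ)^(j+1)) * (K*ε/N) := by rw [hpow]; ring
  -- partial sums bound
  have hpartial : ∀ mm : ℕ, ∑ k ∈ Finset.range mm, |a (N + k) - a (N + k + 1)| ≤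
      4 * K * ε / N := by
    intro mm
    have heq : ∑ k ∈ Finset.range mm, |a (N + k) - a (N + k + 1)| =
        ∑ k ∈ Finset.Ico N (N + mm), |a k - a (k + 1)| := by
      rw [Finset.sum_Ico_eq_sum_range]
      simp
    rw [heq]
    have hsub : Finset.Ico N (N + mm) ⊆ Finset.Icc N (2^mm * N) := by
      intro k hk
      simp only [Finset.mem_Ico, Finset.mem_Icc] at *
      have hp : mm + 1 ≤ 2^mm := Nat.lt_two_pow_self
      have ha1 : N + mm ≤ (mm+1)*N := by
        have h := Nat.mul_le_mul_left mm hN1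
        calc N + mm = mm*1 + N := by ring
          _ ≤ mm*N + N := Nat.add_le_add_right h N
          _ = (mm+1)*N := by ring
      have ha2 : (mm+1)*N ≤ 2^mm*N := Nat.mul_le_mul_right N hp
      exact ⟨hk.1, hk.2.le.trans (ha1.trans ha2)⟩
    have h1 : ∑ k ∈ Finset.Ico N (N+mm), |a k - a (k+1)| ≤
        ∑ k ∈ Finset.Icc N (2^mm*N), |a k - a (k+1)| :=
      Finset.sum_le_sum_of_subset_of_nonneg hsub (fun _ _ _ => abs_nonneg _)
    have h2 := S mm
    have h3 : (0:ℝ) ≤ K*ε/N := by positivity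
    have h4 : (0:ℝ) ≤ (1/2:ℝ)^mm := by positivity
    have h5 : (4 - 2*(1/2:ℝ)^mm) * (K*ε/N) ≤ 4 * (K*ε/N) := by nlinarith
    have h6 : 4 * (K*ε/N) = 4*K*ε/N := by ring
    linarith
  have hsummable : Summable fun k : ℕ => |a (N + k) - a (N + k + 1)| :=
    summable_of_sum_range_le (fun k => abs_nonneg _) hpartial
  exact ⟨hsummable, Summable.tsum_le_of_sum_range_le hsummable hpartial⟩
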